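/- Let α, β, γ be real numbers with αβ ≠ 0, let K, L ≥ 1, and define u(k,ℓ) = k^α ℓ^β / (K^α L^β) for k ∼ K, ℓ ∼ L (i.e., K < k ≤ 2K, L < ℓ ≤ 2L). Then for any C > 0, the number of quadruples (k, k', ℓ, ℓ') with k, k' ∼ K, ℓ, ℓ' ∼ L and |u(k,ℓ) - u(k',ℓ')| ≤ C is O(KL·log(2KL) + K²L²C), with implied constant depending only on α and β. -/

import Mathlib

open Finset Real

lemma sep_count {γ : Type*} (s : Finset γ) (f : γ → ℝ) (ε m len : ℝ)
    (hε : 0 < ε) (hlen : 0 ≤ len)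
    (hsep : ∀ p ∈ s, ∀ q ∈ s, p ≠ q → ε ≤ |f p - f q|)
    (hmem : ∀ p ∈ s, f p ∈ Set.Icc m (m + len)) :
    (s.card : ℝ) ≤ len / ε + 1 := by
  classical
  have hinj : Set.InjOn (fun p => ⌊(f p - m)/ε⌋) s := by
    intro p hp q hq hpq
    by_contra hne
    have h1 := hsep p hp q hq hne
    simp only at hpq
    have hfl : |(f p - m)/ε - (f q - m)/ε| < 1 := by
      have h2 : ((⌊(f p - m)/ε⌋ : ℝ)) ≤ (f p - m)/ε := Int.floor_le _
      have h3 : (f p - m)/ε < ⌊(f p - m)/ε⌋ + 1 := Int.lt_floor_add_one _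
      have h4 : ((⌊(f q - m)/ε⌋ : ℝ)) ≤ (f q - m)/ε := Int.floor_le _
      have h5 : (f q - m)/ε < ⌊(f q - m)/ε⌋ + 1 := Int.lt_floor_add_one _
      rw [hpq] at h2 h3
      rw [abs_lt]; constructor <;> linarith
    have : |f p - f q| < ε := by
      have heq : (f p - m)/ε - (f q - m)/ε = (f p - f q)/ε := by ring
      rw [heq, abs_div, abs_of_pos hε, div_lt_one hε] at hfl
      exact hfl
    linarith
  have hcard : s.card = (s.image (fun p => ⌊(f p - m)/ε⌋)).card :=
    (Finset.card_image_of_injOn hinj).symm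
  have hsub : s.image (fun p => ⌊(f p - m)/ε⌋) ⊆ Finset.Icc 0 ⌊len/ε⌋ := by
    intro z hz
    simp only [Finset.mem_image] at hz
    obtain ⟨p, hp, rfl⟩ := hz
    obtain ⟨hl, hr⟩ := hmem p hp
    rw [Finset.mem_Icc]
    refine ⟨Int.le_floor.2 (by simpa using div_nonneg (by linarith) hε.le), ?_⟩
    exact Int.floor_le_floor (by gcongr <;> linarith)
  have h1 : s.card ≤ (Finset.Icc (0:ℤ) ⌊len/ε⌋).card := hcard ▸ Finset.card_le_card hsub
  have h2 : (Finset.Icc (0:ℤ) ⌊len/ε⌋).card = (⌊len/ε⌋ + 1).toNat := by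
    rw [Int.card_Icc]; ring_nf
  have hfl0 : (0:ℤ) ≤ ⌊len/ε⌋ := Int.le_floor.2 (by simpa using div_nonneg hlen hε.le)
  have h3 : (s.card : ℝ) ≤ ((⌊len/ε⌋ + 1).toNat : ℝ) := by exact_mod_cast h2 ▸ h1
  have h4 : ((⌊len/ε⌋ + 1).toNat : ℝ) = ((⌊len/ε⌋ : ℝ) + 1) := by
    rw [← Int.cast_natCast, Int.toNat_of_nonneg (by linarith : (0:ℤ) ≤ ⌊len/ε⌋ + 1)]; push_cast; ring
  have h5 := Int.floor_le (len/ε)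
  linarith

lemma abs_log_sub_log_ge {x y : ℝ} (hx : 0 < x) (hy : 0 < y) (hx2 : x ≤ 2) (hy2 : y ≤ 2) :
    |x - y| / 2 ≤ |Real.log x - Real.log y| := by
  rcases le_total y x with h | h
  · have h1 : Real.log (y / x) ≤ y / x - 1 := Real.log_le_sub_one_of_pos (by positivity)
    rw [Real.log_div hy.ne' hx.ne'] at h1
    have h2 : 1 - y / x ≤ Real.log x - Real.log y := by linarith
    have h3 : (x - y) / x = 1 - y / x := by field_simp
    have h4 : (x - y) / 2 ≤ (x - y) / x := by
      rcases eq_or_lt_of_le h with rfl | hlt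
      · simp
      · apply div_le_div_of_nonneg_left (by linarith) hx hx2
    rw [abs_of_nonneg (by linarith : (0:ℝ) ≤ x - y), abs_of_nonneg (by linarith)]
    linarith
  · have h1 : Real.log (x / y) ≤ x / y - 1 := Real.log_le_sub_one_of_pos (by positivity)
    rw [Real.log_div hx.ne' hy.ne'] at h1
    have h3 : (y - x) / y = 1 - x / y := by field_simp
    have h4 : (y - x) / 2 ≤ (y - x) / y := by
      rcases eq_or_lt_of_le h with rfl | hlt
      · simp
      · apply div_le_div_of_nonneg_left (by linarith) hy hy2
    rw [abs_of_nonpos (by linarith : x - y ≤ 0), abs_of_nonpos (by linarith : Real.log x - Real.log y ≤ 0)]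
    linarith

lemma coprime_pair_eq {c d c' d' : ℤ} (hd : 0 < d) (hd' : 0 < d')
    (h1 : Int.gcd c d = 1) (h2 : Int.gcd c' d' = 1) (h : c * d' = c' * d) :
    c = c' ∧ d = d' := by
  have hc1 : IsCoprime c d := Int.isCoprime_iff_gcd_eq_one.2 h1
  have hc2 : IsCoprime c' d' := Int.isCoprime_iff_gcd_eq_one.2 h2
  have hdd' : d ∣ d' := by
    have : d ∣ c * d' := ⟨c', by linarith⟩
    exact (hc1.symm.dvd_of_dvd_mul_left this)
  have hd'd : d' ∣ d := by
    have : d' ∣ c' * d := ⟨c, by linarith⟩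
    exact (hc2.symm.dvd_of_dvd_mul_left this)
  have hdeq : d = d' := Int.dvd_antisymm hd.le hd'.le hdd' hd'd
  subst hdeq
  exact ⟨mul_right_cancel₀ (by positivity) h, rfl⟩

lemma frac_spacing {D : ℝ} (hD : 0 < D) {c d c' d' : ℤ}
    (hc1 : D < (c:ℝ)) (hc2 : (c:ℝ) ≤ 2*D) (hd1 : D < (d:ℝ)) (hd2 : (d:ℝ) ≤ 2*D)
    (hc1' : D < (c':ℝ)) (hc2' : (c':ℝ) ≤ 2*D) (hd1' : D < (d':ℝ)) (hd2' : (d':ℝ) ≤ 2*D)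
    (g1 : Int.gcd c d = 1) (g2 : Int.gcd c' d' = 1)
    (hne : ¬(c = c' ∧ d = d')) :
    1/(8*D^2) ≤ |(Real.log c - Real.log d) - (Real.log c' - Real.log d')| := by
  have hcp : (0:ℝ) < c := hD.trans hc1
  have hdp : (0:ℝ) < d := hD.trans hd1
  have hcp' : (0:ℝ) < c' := hD.trans hc1'
  have hdp' : (0:ℝ) < d' := hD.trans hd1'
  have hdz : (0:ℤ) < d := by exact_mod_cast hdp
  have hdz' : (0:ℤ) < d' := by exact_mod_cast hdp'
  have hcross : c * d' ≠ c' * d := fun h => hne (coprime_pair_eq hdz hdz' g1 g2 h)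
  have habs : (1:ℝ) ≤ |(c:ℝ) * d' - c' * d| := by
    have : (c * d' - c' * d : ℤ) ≠ 0 := sub_ne_zero.2 hcross
    have h1 : (1:ℤ) ≤ |c * d' - c' * d| := Int.one_le_abs this
    calc (1:ℝ) ≤ ((|c * d' - c' * d| : ℤ) : ℝ) := by exact_mod_cast h1
      _ = |(c:ℝ) * d' - c' * d| := by push_cast [Int.cast_abs]; ring_nf
  have hxy : 1/(4*D^2) ≤ |(c:ℝ)/d - (c':ℝ)/d'| := by
    have heq : (c:ℝ)/d - (c':ℝ)/d' = ((c:ℝ) * d' - c' * d) / (d * d') := by field_simp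
    rw [heq, abs_div, abs_of_pos (by positivity : (0:ℝ) < (d:ℝ)*d')]
    apply div_le_div₀ (by positivity) habs (by positivity)
    nlinarith
  have hx2 : (c:ℝ)/d ≤ 2 := by rw [div_le_iff₀ hdp]; nlinarith
  have hy2 : (c':ℝ)/d' ≤ 2 := by rw [div_le_iff₀ hdp']; nlinarith
  have := abs_log_sub_log_ge (show (0:ℝ) < (c:ℝ)/d by positivity)
    (show (0:ℝ) < (c':ℝ)/d' by positivity) hx2 hy2
  rw [Real.log_div hcp.ne' hdp.ne', Real.log_div hcp'.ne' hdp'.ne'] at this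
  have h24 : |(c:ℝ)/d - (c':ℝ)/d'| / 2 ≥ 1/(8*D^2) := by
    rw [ge_iff_le, le_div_iff₀ (by norm_num : (0:ℝ) < 2)]
    calc 1/(8*D^2) * 2 = 1/(4*D^2) := by ring
      _ ≤ |(c:ℝ)/d - (c':ℝ)/d'| := hxy
  linarith

lemma Ioc_succ_int (a b : ℤ) (h : a ≤ b) :
    Finset.Ioc a (b+1) = insert (b+1) (Finset.Ioc a b) := by
  ext x; simp [Finset.mem_Ioc]; omega

lemma harmonic_bound : ∀ n : ℤ, 1 ≤ n →
    ∑ g ∈ Finset.Ioc (0:ℤ) n, (1:ℝ)/g ≤ 1 + Real.log n := by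
  refine Int.le_induction ?_ ?_
  · have : Finset.Ioc (0:ℤ) 1 = {1} := by decide
    rw [this]; simp
  · intro n hn ih
    rw [Ioc_succ_int 0 n (by linarith), Finset.sum_insert (by simp)]
    have hnp : (0:ℝ) < n := by exact_mod_cast hn
    have hstep : (1:ℝ)/((n:ℝ)+1) ≤ Real.log ((n:ℝ)+1) - Real.log n := by
      have h1 : Real.log ((n:ℝ)/((n:ℝ)+1)) ≤ (n:ℝ)/((n:ℝ)+1) - 1 :=
        Real.log_le_sub_one_of_pos (by positivity)
      rw [Real.log_div hnp.ne' (by positivity)] at h1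
      have h2 : (n:ℝ)/((n:ℝ)+1) - 1 = -(1/((n:ℝ)+1)) := by field_simp; ring
      rw [h2] at h1
      linarith
    have hc : ((n + 1 : ℤ) : ℝ) = (n:ℝ) + 1 := by push_cast; ring
    rw [hc]
    linarith

lemma basel_bound : ∀ n : ℤ, 1 ≤ n →
    ∑ g ∈ Finset.Ioc (0:ℤ) n, (1:ℝ)/(g:ℝ)^2 ≤ 2 := by
  have key : ∀ n : ℤ, 1 ≤ n → ∑ g ∈ Finset.Ioc (0:ℤ) n, (1:ℝ)/(g:ℝ)^2 ≤ 2 - 1/(n:ℝ) := by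
    refine Int.le_induction ?_ ?_
    · have : Finset.Ioc (0:ℤ) 1 = {1} := by decide
      rw [this]; norm_num
    · intro n hn ih
      rw [Ioc_succ_int 0 n (by linarith), Finset.sum_insert (by simp)]
      have hnp : (0:ℝ) < n := by exact_mod_cast hn
      have hc : ((n + 1 : ℤ) : ℝ) = (n:ℝ) + 1 := by push_cast; ring
      rw [hc]
      have hstep : (1:ℝ)/((n:ℝ)+1)^2 ≤ 1/(n:ℝ) - 1/((n:ℝ)+1) := by
        rw [div_sub_div _ _ hnp.ne' (by positivity : ((n:ℝ)+1) ≠ 0)]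
        rw [div_le_div_iff₀ (by positivity) (by positivity)]
        ring_nf
        nlinarith
      linarith
  intro n hn
  have := key n hn
  have hnp : (0:ℝ) < n := by exact_mod_cast hn
  have : (0:ℝ) < 1/(n:ℝ) := by positivity
  linarith [key n hn]

attribute [local instance] Classical.propDecidable

noncomputable def Fl (α β K L δ : ℝ) : Finset ((ℤ×ℤ)×(ℤ×ℤ)) :=
  ((Finset.Ioc ⌊K⌋ ⌊2*K⌋ ×ˢ Finset.Ioc ⌊K⌋ ⌊2*K⌋) ×ˢ
    (Finset.Ioc ⌊L⌋ ⌊2*L⌋ ×ˢ Finset.Ioc ⌊L⌋ ⌊2*L⌋)).filter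
    (fun q => |α*(Real.log q.1.1 - Real.log q.1.2) + β*(Real.log q.2.1 - Real.log q.2.2)| ≤ δ)

noncomputable def Fgh (α β K L δ : ℝ) (gh : ℤ×ℤ) : Finset ((ℤ×ℤ)×(ℤ×ℤ)) :=
  (Fl α β K L δ).filter
    (fun q => ((Int.gcd q.1.1 q.1.2 : ℤ), (Int.gcd q.2.1 q.2.2 : ℤ)) = gh)

lemma mem_Fgh_iff {α β K L δ : ℝ} {gh : ℤ×ℤ} {q : (ℤ×ℤ)×(ℤ×ℤ)} :
    q ∈ Fgh α β K L δ gh ↔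
      (K < q.1.1 ∧ (q.1.1:ℝ) ≤ 2*K) ∧ (K < q.1.2 ∧ (q.1.2:ℝ) ≤ 2*K) ∧
      (L < q.2.1 ∧ (q.2.1:ℝ) ≤ 2*L) ∧ (L < q.2.2 ∧ (q.2.2:ℝ) ≤ 2*L) ∧
      |α*(Real.log q.1.1 - Real.log q.1.2) + β*(Real.log q.2.1 - Real.log q.2.2)| ≤ δ ∧
      (Int.gcd q.1.1 q.1.2 : ℤ) = gh.1 ∧ (Int.gcd q.2.1 q.2.2 : ℤ) = gh.2 := by
  simp only [Fgh, Fl, Finset.mem_filter, Finset.mem_product, Finset.mem_Ioc,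
    Int.floor_lt, Int.le_floor, Prod.ext_iff]
  tauto

lemma card_Ioc_le {B : ℝ} (hB : 1/2 ≤ B) :
    ((Finset.Ioc ⌊B⌋ ⌊2*B⌋).card : ℝ) ≤ 3*B := by
  rw [Int.card_Ioc]
  rcases le_or_gt (⌊2*B⌋ - ⌊B⌋) 0 with hc | hc
  · rw [Int.toNat_of_nonpos hc]; norm_num; linarith
  · rw [← Int.cast_natCast, Int.toNat_of_nonneg hc.le]
    push_cast
    have h1 := Int.floor_le (2*B)
    have h2 := Int.lt_floor_add_one B
    push_cast at h1 h2
    linarith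
set_option maxHeartbeats 1600000

lemma core_count {α β K L δ : ℝ} (hβ : β ≠ 0) (hK : 1 ≤ K) (hL : 1 ≤ L) (hδ : 0 < δ)
    {g h : ℤ} (hg0 : 0 < g) (hh0 : 0 < h) (hg2 : (g:ℝ) ≤ 2*K) (hh2 : (h:ℝ) ≤ 2*L) :
    ((Fgh α β K L δ (g,h)).card : ℝ) ≤ 9*(K/g)^2 * (16*δ*(L/h)^2/|β| + 1) := by
  have hgR : (0:ℝ) < g := by exact_mod_cast hg0
  have hhR : (0:ℝ) < h := by exact_mod_cast hh0
  set D : ℝ := L/h with hDdef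
  have hDpos : 0 < D := by positivity
  set IA : Finset ℤ := Finset.Ioc ⌊K/(g:ℝ)⌋ ⌊2*(K/(g:ℝ))⌋ with hIA
  have Hmap : ∀ q ∈ Fgh α β K L δ (g,h), (q.1.1/g, q.1.2/g) ∈ IA ×ˢ IA := by
    intro q hq
    rw [mem_Fgh_iff] at hq
    obtain ⟨⟨hk1, hk2⟩, ⟨hk3, hk4⟩, _, _, _, hgcd0, _⟩ := hq
    have hgcd : (Int.gcd q.1.1 q.1.2 : ℤ) = g := hgcd0
    have hdvd1 : g ∣ q.1.1 := by rw [← hgcd]; exact Int.gcd_dvd_left _ _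
    have hdvd2 : g ∣ q.1.2 := by rw [← hgcd]; exact Int.gcd_dvd_right _ _
    have key : ∀ x : ℤ, g ∣ x → K < (x:ℝ) → (x:ℝ) ≤ 2*K → x/g ∈ IA := by
      intro x hdvd hx1 hx2
      have hxg : (x:ℝ) = (g:ℝ) * ((x/g : ℤ):ℝ) := by
        exact_mod_cast (Int.mul_ediv_cancel' hdvd).symm
      rw [hIA, Finset.mem_Ioc]
      constructor
      · rw [Int.floor_lt, div_lt_iff₀ hgR]
        nlinarith
      · rw [Int.le_floor, show 2*(K/(g:ℝ)) = 2*K/(g:ℝ) by ring, le_div_iff₀ hgR]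
        nlinarith
    exact Finset.mem_product.2 ⟨key _ hdvd1 hk1 hk2, key _ hdvd2 hk3 hk4⟩
  have hcardeq := Finset.card_eq_sum_card_fiberwise Hmap
  have Hfib : ∀ ab ∈ IA ×ˢ IA,
      (((Fgh α β K L δ (g,h)).filter (fun q => (q.1.1/g, q.1.2/g) = ab)).card : ℝ)
        ≤ 16*δ*D^2/|β| + 1 := by
    intro ab _
    have hε : 0 < |β|/(8*D^2) := by positivity
    have hdata : ∀ p ∈ (Fgh α β K L δ (g,h)).filter (fun q => (q.1.1/g, q.1.2/g) = ab),
        p.1.1 = g * ab.1 ∧ p.1.2 = g * ab.2 ∧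
        h ∣ p.2.1 ∧ h ∣ p.2.2 ∧
        Int.gcd (p.2.1/h) (p.2.2/h) = 1 ∧
        (L < (p.2.1:ℝ) ∧ (p.2.1:ℝ) ≤ 2*L) ∧ (L < (p.2.2:ℝ) ∧ (p.2.2:ℝ) ≤ 2*L) ∧
        |α*(Real.log p.1.1 - Real.log p.1.2) + β*(Real.log p.2.1 - Real.log p.2.2)| ≤ δ := by
      intro p hp
      rw [Finset.mem_filter, mem_Fgh_iff] at hp
      obtain ⟨⟨_, _, hl1, hl2, hcond, hgcd1x, hgcd2x⟩, hab⟩ := hp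
      have hgcd1 : (Int.gcd p.1.1 p.1.2 : ℤ) = g := hgcd1x
      have hgcd2 : (Int.gcd p.2.1 p.2.2 : ℤ) = h := hgcd2x
      have hab1 : p.1.1/g = ab.1 := congrArg Prod.fst hab
      have hab2 : p.1.2/g = ab.2 := congrArg Prod.snd hab
      have hdvd1 : g ∣ p.1.1 := by rw [← hgcd1]; exact Int.gcd_dvd_left _ _
      have hdvd2 : g ∣ p.1.2 := by rw [← hgcd1]; exact Int.gcd_dvd_right _ _
      have hdvd3 : h ∣ p.2.1 := by rw [← hgcd2]; exact Int.gcd_dvd_left _ _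
      have hdvd4 : h ∣ p.2.2 := by rw [← hgcd2]; exact Int.gcd_dvd_right _ _
      have hgpos : 0 < Int.gcd p.2.1 p.2.2 := by
        have : (0:ℤ) < (Int.gcd p.2.1 p.2.2 : ℤ) := by rw [hgcd2]; exact hh0
        exact_mod_cast this
      have hcop := Int.gcd_div_gcd_div_gcd hgpos
      rw [hgcd2] at hcop
      exact ⟨by rw [← hab1, Int.mul_ediv_cancel' hdvd1],
        by rw [← hab2, Int.mul_ediv_cancel' hdvd2], hdvd3, hdvd4, hcop, hl1, hl2, hcond⟩
    have hsc := sep_count ((Fgh α β K L δ (g,h)).filter (fun q => (q.1.1/g, q.1.2/g) = ab))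
      (fun q => β*(Real.log q.2.1 - Real.log q.2.2)) (|β|/(8*D^2))
      (-(α*(Real.log ((g*ab.1 : ℤ):ℝ) - Real.log ((g*ab.2 : ℤ):ℝ))) - δ) (2*δ) hε
      (by linarith) ?_ ?_
    · have hb' : |β| ≠ 0 := abs_ne_zero.2 hβ
      have hD' : D ≠ 0 := ne_of_gt hDpos
      have heq : 2*δ/(|β|/(8*D^2)) = 16*δ*D^2/|β| := by
        field_simp
        ring
      rw [heq] at hsc
      exact hsc
    · -- separation
      intro p hp q hq hpq
      obtain ⟨hp1, hp2, hp3, hp4, hp5, ⟨hp6, hp7⟩, ⟨hp8, hp9⟩, _⟩ := hdata p hp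
      obtain ⟨hq1, hq2, hq3, hq4, hq5, ⟨hq6, hq7⟩, ⟨hq8, hq9⟩, _⟩ := hdata q hq
      set c := p.2.1/h with hc
      set d := p.2.2/h with hd
      set c' := q.2.1/h with hc'
      set d' := q.2.2/h with hd'
      have ec : p.2.1 = h * c := (Int.mul_ediv_cancel' hp3).symm
      have ed : p.2.2 = h * d := (Int.mul_ediv_cancel' hp4).symm
      have ec' : q.2.1 = h * c' := (Int.mul_ediv_cancel' hq3).symm
      have ed' : q.2.2 = h * d' := (Int.mul_ediv_cancel' hq4).symm
      have ecR : (p.2.1:ℝ) = (h:ℝ) * (c:ℝ) := by exact_mod_cast congrArg (Int.cast : ℤ → ℝ) ec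
      have edR : (p.2.2:ℝ) = (h:ℝ) * (d:ℝ) := by exact_mod_cast congrArg (Int.cast : ℤ → ℝ) ed
      have ecR' : (q.2.1:ℝ) = (h:ℝ) * (c':ℝ) := by exact_mod_cast congrArg (Int.cast : ℤ → ℝ) ec'
      have edR' : (q.2.2:ℝ) = (h:ℝ) * (d':ℝ) := by exact_mod_cast congrArg (Int.cast : ℤ → ℝ) ed'
      have hcb : D < (c:ℝ) ∧ (c:ℝ) ≤ 2*D := by
        rw [hDdef]
        constructor
        · rw [div_lt_iff₀ hhR]; nlinarith
        · rw [show 2*(L/(h:ℝ)) = 2*L/(h:ℝ) by ring, le_div_iff₀ hhR]; nlinarith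
      have hdb : D < (d:ℝ) ∧ (d:ℝ) ≤ 2*D := by
        rw [hDdef]
        constructor
        · rw [div_lt_iff₀ hhR]; nlinarith
        · rw [show 2*(L/(h:ℝ)) = 2*L/(h:ℝ) by ring, le_div_iff₀ hhR]; nlinarith
      have hcb' : D < (c':ℝ) ∧ (c':ℝ) ≤ 2*D := by
        rw [hDdef]
        constructor
        · rw [div_lt_iff₀ hhR]; nlinarith
        · rw [show 2*(L/(h:ℝ)) = 2*L/(h:ℝ) by ring, le_div_iff₀ hhR]; nlinarith
      have hdb' : D < (d':ℝ) ∧ (d':ℝ) ≤ 2*D := by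
        rw [hDdef]
        constructor
        · rw [div_lt_iff₀ hhR]; nlinarith
        · rw [show 2*(L/(h:ℝ)) = 2*L/(h:ℝ) by ring, le_div_iff₀ hhR]; nlinarith
      have hne : ¬(c = c' ∧ d = d') := by
        rintro ⟨e1, e2⟩
        apply hpq
        have : p.2 = q.2 := by
          apply Prod.ext
          · rw [ec, ec', e1]
          · rw [ed, ed', e2]
        have hfst : p.1 = q.1 := by
          apply Prod.ext
          · rw [hp1, hq1]
          · rw [hp2, hq2]
        exact Prod.ext hfst this
      have hspace := frac_spacing hDpos hcb.1 hcb.2 hdb.1 hdb.2 hcb'.1 hcb'.2 hdb'.1 hdb'.2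
        hp5 hq5 hne
      have hcpos : (0:ℝ) < (c:ℝ) := lt_trans hDpos hcb.1
      have hdpos : (0:ℝ) < (d:ℝ) := lt_trans hDpos hdb.1
      have hcpos' : (0:ℝ) < (c':ℝ) := lt_trans hDpos hcb'.1
      have hdpos' : (0:ℝ) < (d':ℝ) := lt_trans hDpos hdb'.1
      have lc : Real.log (p.2.1:ℝ) = Real.log (h:ℝ) + Real.log (c:ℝ) := by
        rw [ecR, Real.log_mul hhR.ne' hcpos.ne']
      have ld : Real.log (p.2.2:ℝ) = Real.log (h:ℝ) + Real.log (d:ℝ) := by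
        rw [edR, Real.log_mul hhR.ne' hdpos.ne']
      have lc' : Real.log (q.2.1:ℝ) = Real.log (h:ℝ) + Real.log (c':ℝ) := by
        rw [ecR', Real.log_mul hhR.ne' hcpos'.ne']
      have ld' : Real.log (q.2.2:ℝ) = Real.log (h:ℝ) + Real.log (d':ℝ) := by
        rw [edR', Real.log_mul hhR.ne' hdpos'.ne']
      show |β|/(8*D^2) ≤ |β*(Real.log p.2.1 - Real.log p.2.2) - β*(Real.log q.2.1 - Real.log q.2.2)|
      have : β*(Real.log p.2.1 - Real.log p.2.2) - β*(Real.log q.2.1 - Real.log q.2.2)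
          = β * ((Real.log (c:ℝ) - Real.log (d:ℝ)) - (Real.log (c':ℝ) - Real.log (d':ℝ))) := by
        rw [lc, ld, lc', ld']; ring
      rw [this, abs_mul]
      calc |β|/(8*D^2) = |β| * (1/(8*D^2)) := by ring
        _ ≤ |β| * |(Real.log (c:ℝ) - Real.log (d:ℝ)) - (Real.log (c':ℝ) - Real.log (d':ℝ))| := by
            apply mul_le_mul_of_nonneg_left hspace (abs_nonneg _)
    · -- membership in Icc
      intro p hp
      obtain ⟨hp1, hp2, _, _, _, _, _, hcond⟩ := hdata p hp
      have e1 : (p.1.1:ℝ) = ((g*ab.1 : ℤ):ℝ) := by rw [hp1]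
      have e2 : (p.1.2:ℝ) = ((g*ab.2 : ℤ):ℝ) := by rw [hp2]
      rw [e1, e2] at hcond
      obtain ⟨hA, hB⟩ := abs_le.1 hcond
      constructor
      · linarith
      · linarith
  have hbound : ((Fgh α β K L δ (g,h)).card : ℝ)
      ≤ ((IA ×ˢ IA).card : ℝ) * (16*δ*D^2/|β| + 1) := by
    have : ((Fgh α β K L δ (g,h)).card : ℝ)
        = ∑ ab ∈ IA ×ˢ IA, (((Fgh α β K L δ (g,h)).filter (fun q => (q.1.1/g, q.1.2/g) = ab)).card : ℝ) := by
      rw [hcardeq]; push_cast; rfl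
    rw [this]
    calc ∑ ab ∈ IA ×ˢ IA, (((Fgh α β K L δ (g,h)).filter (fun q => (q.1.1/g, q.1.2/g) = ab)).card : ℝ)
        ≤ ∑ ab ∈ IA ×ˢ IA, (16*δ*D^2/|β| + 1) := Finset.sum_le_sum Hfib
      _ = ((IA ×ˢ IA).card : ℝ) * (16*δ*D^2/|β| + 1) := by rw [Finset.sum_const, nsmul_eq_mul]
  have hIAcard : ((IA).card : ℝ) ≤ 3*(K/g) := by
    apply card_Ioc_le
    rw [le_div_iff₀ hgR]
    linarith
  have hIAnn : (0:ℝ) ≤ (IA.card : ℝ) := by positivity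
  have hprod : (((IA ×ˢ IA).card) : ℝ) ≤ 9*(K/g)^2 := by
    rw [Finset.card_product]
    push_cast
    nlinarith
  have hpos2 : (0:ℝ) ≤ 16*δ*D^2/|β| + 1 := by positivity
  calc ((Fgh α β K L δ (g,h)).card : ℝ) ≤ ((IA ×ˢ IA).card : ℝ) * (16*δ*D^2/|β| + 1) := hbound
    _ ≤ 9*(K/g)^2 * (16*δ*D^2/|β| + 1) := by
        apply mul_le_mul_of_nonneg_right hprod hpos2

lemma Fgh_card_swap (α β K L δ : ℝ) (g h : ℤ) :
    (Fgh α β K L δ (g,h)).card = (Fgh β α L K δ (h,g)).card := by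
  apply Finset.card_bij (fun q _ => (q.2, q.1))
  · intro q hq
    rw [mem_Fgh_iff] at hq ⊢
    obtain ⟨h1, h2, h3, h4, h5, h6, h7⟩ := hq
    refine ⟨h3, h4, h1, h2, ?_, h7, h6⟩
    rw [show β*(Real.log q.2.1 - Real.log q.2.2) + α*(Real.log q.1.1 - Real.log q.1.2)
      = α*(Real.log q.1.1 - Real.log q.1.2) + β*(Real.log q.2.1 - Real.log q.2.2) from by ring]
    exact h5
  · intro p _ q _ hpq
    have h1 : p.2 = q.2 := congrArg Prod.fst hpq
    have h2 : p.1 = q.1 := congrArg Prod.snd hpq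
    exact Prod.ext h2 h1
  · intro b hb
    refine ⟨(b.2, b.1), ?_, rfl⟩
    rw [mem_Fgh_iff] at hb ⊢
    obtain ⟨h1, h2, h3, h4, h5, h6, h7⟩ := hb
    refine ⟨h3, h4, h1, h2, ?_, h7, h6⟩
    rw [show α*(Real.log b.2.1 - Real.log b.2.2) + β*(Real.log b.1.1 - Real.log b.1.2)
      = β*(Real.log b.1.1 - Real.log b.1.2) + α*(Real.log b.2.1 - Real.log b.2.2) from by ring]
    exact h5

lemma Fgh_bound {α β K L δ : ℝ} (hα : α ≠ 0) (hβ : β ≠ 0) (hK : 1 ≤ K) (hL : 1 ≤ L)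
    (hδ : 0 < δ) {g h : ℤ} (hg0 : 0 < g) (hh0 : 0 < h)
    (hg2 : (g:ℝ) ≤ 2*K) (hh2 : (h:ℝ) ≤ 2*L) :
    ((Fgh α β K L δ (g,h)).card : ℝ)
      ≤ 144*δ/(min |α| |β|)*((K/g)^2*(L/h)^2) + 9*(min (K/g) (L/h))^2 := by
  have hgR : (0:ℝ) < g := by exact_mod_cast hg0
  have hhR : (0:ℝ) < h := by exact_mod_cast hh0
  have hμ : 0 < min |α| |β| := lt_min (abs_pos.2 hα) (abs_pos.2 hβ)
  have hBpos : 0 < K/g := by positivity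
  have hDpos : 0 < L/h := by positivity
  rcases le_total (K/g) (L/h) with hle | hle
  · have hc := core_count (α := α) hβ hK hL hδ hg0 hh0 hg2 hh2
    have hmin : min (K/g) (L/h) = K/g := min_eq_left hle
    rw [hmin]
    have hββ : min |α| |β| ≤ |β| := min_le_right _ _
    have key : 16*δ*(L/h)^2/|β| ≤ 16*δ*(L/h)^2/(min |α| |β|) := by
      apply div_le_div_of_nonneg_left (by positivity) hμ hββ
    have expand : 9*(K/g)^2 * (16*δ*(L/h)^2/(min |α| |β|) + 1)
        = 144*δ/(min |α| |β|)*((K/g)^2*(L/h)^2) + 9*(K/g)^2 := by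
      field_simp
      ring
    calc ((Fgh α β K L δ (g,h)).card : ℝ)
        ≤ 9*(K/g)^2 * (16*δ*(L/h)^2/|β| + 1) := hc
      _ ≤ 9*(K/g)^2 * (16*δ*(L/h)^2/(min |α| |β|) + 1) := by nlinarith
      _ = 144*δ/(min |α| |β|)*((K/g)^2*(L/h)^2) + 9*(K/g)^2 := expand
  · rw [Fgh_card_swap]
    have hc := core_count (α := β) hα hL hK hδ hh0 hg0 hh2 hg2
    have hmin : min (K/g) (L/h) = L/h := min_eq_right hle
    rw [hmin]
    have hαα : min |α| |β| ≤ |α| := min_le_left _ _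
    have key : 16*δ*(K/g)^2/|α| ≤ 16*δ*(K/g)^2/(min |α| |β|) := by
      apply div_le_div_of_nonneg_left (by positivity) hμ hαα
    have expand : 9*(L/h)^2 * (16*δ*(K/g)^2/(min |α| |β|) + 1)
        = 144*δ/(min |α| |β|)*((K/g)^2*(L/h)^2) + 9*(L/h)^2 := by
      field_simp
      ring
    calc ((Fgh β α L K δ (h,g)).card : ℝ)
        ≤ 9*(L/h)^2 * (16*δ*(K/g)^2/|α| + 1) := hc
      _ ≤ 9*(L/h)^2 * (16*δ*(K/g)^2/(min |α| |β|) + 1) := by nlinarith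
      _ = 144*δ/(min |α| |β|)*((K/g)^2*(L/h)^2) + 9*(L/h)^2 := expand

lemma min_sq_sum {K L : ℝ} (hK : 1 ≤ K) (hL : 1 ≤ L) :
    ∑ gh ∈ Finset.Ioc (0:ℤ) ⌊2*K⌋ ×ˢ Finset.Ioc (0:ℤ) ⌊2*L⌋,
      (min (K/(gh.1:ℝ)) (L/(gh.2:ℝ)))^2
    ≤ K*L*(2 + Real.log (2*K) + Real.log (2*L)) := by
  have hKfl : (1:ℤ) ≤ ⌊2*K⌋ := Int.le_floor.2 (by push_cast; linarith)
  have hLfl : (1:ℤ) ≤ ⌊2*L⌋ := Int.le_floor.2 (by push_cast; linarith)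
  have hKpos : (0:ℝ) < K := by linarith
  have hLpos : (0:ℝ) < L := by linarith
  have step1 : ∑ gh ∈ Finset.Ioc (0:ℤ) ⌊2*K⌋ ×ˢ Finset.Ioc (0:ℤ) ⌊2*L⌋,
      (min (K/(gh.1:ℝ)) (L/(gh.2:ℝ)))^2
      ≤ ∑ gh ∈ Finset.Ioc (0:ℤ) ⌊2*K⌋ ×ˢ Finset.Ioc (0:ℤ) ⌊2*L⌋,
        ((if K/(gh.1:ℝ) ≤ L/(gh.2:ℝ) then (K/(gh.1:ℝ))^2 else 0)
         + (if L/(gh.2:ℝ) ≤ K/(gh.1:ℝ) then (L/(gh.2:ℝ))^2 else 0)) := by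
    apply Finset.sum_le_sum
    intro gh hgh
    rw [Finset.mem_product, Finset.mem_Ioc, Finset.mem_Ioc] at hgh
    have hg : (0:ℝ) < (gh.1:ℝ) := by exact_mod_cast hgh.1.1
    have hh : (0:ℝ) < (gh.2:ℝ) := by exact_mod_cast hgh.2.1
    rcases le_total (K/(gh.1:ℝ)) (L/(gh.2:ℝ)) with hle | hle
    · rw [min_eq_left hle, if_pos hle]
      have : (0:ℝ) ≤ (if L/(gh.2:ℝ) ≤ K/(gh.1:ℝ) then (L/(gh.2:ℝ))^2 else 0) := by
        split <;> positivity
      linarith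
    · rw [min_eq_right hle, if_pos hle]
      have : (0:ℝ) ≤ (if K/(gh.1:ℝ) ≤ L/(gh.2:ℝ) then (K/(gh.1:ℝ))^2 else 0) := by
        split <;> positivity
      linarith
  have inner1 : ∀ g : ℤ, 0 < g →
      ∑ h ∈ Finset.Ioc (0:ℤ) ⌊2*L⌋, (if K/(g:ℝ) ≤ L/(h:ℝ) then (K/(g:ℝ))^2 else 0)
        ≤ K*L/(g:ℝ) := by
    intro g hg0
    have hgR : (0:ℝ) < g := by exact_mod_cast hg0
    rw [← Finset.sum_filter]
    rw [Finset.sum_const, nsmul_eq_mul]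
    have hsub : (Finset.Ioc (0:ℤ) ⌊2*L⌋).filter (fun h : ℤ => K/(g:ℝ) ≤ L/(h:ℝ))
        ⊆ Finset.Ioc (0:ℤ) ⌊L*(g:ℝ)/K⌋ := by
      intro h hh
      rw [Finset.mem_filter, Finset.mem_Ioc] at hh
      obtain ⟨⟨hh0, _⟩, hcond⟩ := hh
      have hhR : (0:ℝ) < h := by exact_mod_cast hh0
      rw [Finset.mem_Ioc]
      refine ⟨hh0, Int.le_floor.2 ?_⟩
      rw [div_le_div_iff₀ hgR hhR] at hcond
      rw [le_div_iff₀ hKpos]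
      nlinarith
    have hcard : (((Finset.Ioc (0:ℤ) ⌊2*L⌋).filter (fun h : ℤ => K/(g:ℝ) ≤ L/(h:ℝ))).card : ℝ)
        ≤ L*(g:ℝ)/K := by
      calc (((Finset.Ioc (0:ℤ) ⌊2*L⌋).filter (fun h : ℤ => K/(g:ℝ) ≤ L/(h:ℝ))).card : ℝ)
          ≤ ((Finset.Ioc (0:ℤ) ⌊L*(g:ℝ)/K⌋).card : ℝ) := by
            exact_mod_cast Finset.card_le_card hsub
        _ ≤ L*(g:ℝ)/K := by
            rw [Int.card_Ioc]
            rcases le_or_gt (⌊L*(g:ℝ)/K⌋ - 0) 0 with hc | hc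
            · rw [Int.toNat_of_nonpos hc]; norm_num; positivity
            · rw [← Int.cast_natCast, Int.toNat_of_nonneg hc.le]
              push_cast
              have := Int.floor_le (L*(g:ℝ)/K)
              linarith
    calc (((Finset.Ioc (0:ℤ) ⌊2*L⌋).filter (fun h : ℤ => K/(g:ℝ) ≤ L/(h:ℝ))).card : ℝ) * (K/(g:ℝ))^2
        ≤ (L*(g:ℝ)/K) * (K/(g:ℝ))^2 := by
          apply mul_le_mul_of_nonneg_right hcard (by positivity)
      _ = K*L/(g:ℝ) := by field_simp
  have inner2 : ∀ h : ℤ, 0 < h →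
      ∑ g ∈ Finset.Ioc (0:ℤ) ⌊2*K⌋, (if L/(h:ℝ) ≤ K/(g:ℝ) then (L/(h:ℝ))^2 else 0)
        ≤ K*L/(h:ℝ) := by
    intro h hh0
    have hhR : (0:ℝ) < h := by exact_mod_cast hh0
    rw [← Finset.sum_filter]
    rw [Finset.sum_const, nsmul_eq_mul]
    have hsub : (Finset.Ioc (0:ℤ) ⌊2*K⌋).filter (fun g : ℤ => L/(h:ℝ) ≤ K/(g:ℝ))
        ⊆ Finset.Ioc (0:ℤ) ⌊K*(h:ℝ)/L⌋ := by
      intro g hg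
      rw [Finset.mem_filter, Finset.mem_Ioc] at hg
      obtain ⟨⟨hg0, _⟩, hcond⟩ := hg
      have hgR : (0:ℝ) < g := by exact_mod_cast hg0
      rw [Finset.mem_Ioc]
      refine ⟨hg0, Int.le_floor.2 ?_⟩
      rw [div_le_div_iff₀ hhR hgR] at hcond
      rw [le_div_iff₀ hLpos]
      nlinarith
    have hcard : (((Finset.Ioc (0:ℤ) ⌊2*K⌋).filter (fun g : ℤ => L/(h:ℝ) ≤ K/(g:ℝ))).card : ℝ)
        ≤ K*(h:ℝ)/L := by
      calc (((Finset.Ioc (0:ℤ) ⌊2*K⌋).filter (fun g : ℤ => L/(h:ℝ) ≤ K/(g:ℝ))).card : ℝ)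
          ≤ ((Finset.Ioc (0:ℤ) ⌊K*(h:ℝ)/L⌋).card : ℝ) := by
            exact_mod_cast Finset.card_le_card hsub
        _ ≤ K*(h:ℝ)/L := by
            rw [Int.card_Ioc]
            rcases le_or_gt (⌊K*(h:ℝ)/L⌋ - 0) 0 with hc | hc
            · rw [Int.toNat_of_nonpos hc]; norm_num; positivity
            · rw [← Int.cast_natCast, Int.toNat_of_nonneg hc.le]
              push_cast
              have := Int.floor_le (K*(h:ℝ)/L)
              linarith
    calc (((Finset.Ioc (0:ℤ) ⌊2*K⌋).filter (fun g : ℤ => L/(h:ℝ) ≤ K/(g:ℝ))).card : ℝ) * (L/(h:ℝ))^2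
        ≤ (K*(h:ℝ)/L) * (L/(h:ℝ))^2 := by
          apply mul_le_mul_of_nonneg_right hcard (by positivity)
      _ = K*L/(h:ℝ) := by field_simp
  have hharmK : ∑ g ∈ Finset.Ioc (0:ℤ) ⌊2*K⌋, (1:ℝ)/(g:ℝ) ≤ 1 + Real.log (2*K) := by
    have h1 := harmonic_bound ⌊2*K⌋ hKfl
    have h2 : Real.log (⌊2*K⌋:ℝ) ≤ Real.log (2*K) := by
      apply Real.log_le_log (by exact_mod_cast hKfl) (Int.floor_le _)
    linarith
  have hharmL : ∑ h ∈ Finset.Ioc (0:ℤ) ⌊2*L⌋, (1:ℝ)/(h:ℝ) ≤ 1 + Real.log (2*L) := by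
    have h1 := harmonic_bound ⌊2*L⌋ hLfl
    have h2 : Real.log (⌊2*L⌋:ℝ) ≤ Real.log (2*L) := by
      apply Real.log_le_log (by exact_mod_cast hLfl) (Int.floor_le _)
    linarith
  have split : ∑ gh ∈ Finset.Ioc (0:ℤ) ⌊2*K⌋ ×ˢ Finset.Ioc (0:ℤ) ⌊2*L⌋,
        ((if K/(gh.1:ℝ) ≤ L/(gh.2:ℝ) then (K/(gh.1:ℝ))^2 else 0)
         + (if L/(gh.2:ℝ) ≤ K/(gh.1:ℝ) then (L/(gh.2:ℝ))^2 else 0))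
      ≤ K*L*(1 + Real.log (2*K)) + K*L*(1 + Real.log (2*L)) := by
    rw [Finset.sum_add_distrib]
    have part1 : ∑ gh ∈ Finset.Ioc (0:ℤ) ⌊2*K⌋ ×ˢ Finset.Ioc (0:ℤ) ⌊2*L⌋,
        (if K/(gh.1:ℝ) ≤ L/(gh.2:ℝ) then (K/(gh.1:ℝ))^2 else 0) ≤ K*L*(1 + Real.log (2*K)) := by
      rw [Finset.sum_product]
      calc ∑ g ∈ Finset.Ioc (0:ℤ) ⌊2*K⌋, ∑ h ∈ Finset.Ioc (0:ℤ) ⌊2*L⌋,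
            (if K/(g:ℝ) ≤ L/(h:ℝ) then (K/(g:ℝ))^2 else 0)
          ≤ ∑ g ∈ Finset.Ioc (0:ℤ) ⌊2*K⌋, K*L/(g:ℝ) := by
            apply Finset.sum_le_sum
            intro g hg
            rw [Finset.mem_Ioc] at hg
            exact inner1 g hg.1
        _ = K*L * ∑ g ∈ Finset.Ioc (0:ℤ) ⌊2*K⌋, (1:ℝ)/(g:ℝ) := by
            rw [Finset.mul_sum]
            apply Finset.sum_congr rfl
            intro g _
            ring
        _ ≤ K*L*(1 + Real.log (2*K)) := by
            apply mul_le_mul_of_nonneg_left hharmK (by positivity)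
    have part2 : ∑ gh ∈ Finset.Ioc (0:ℤ) ⌊2*K⌋ ×ˢ Finset.Ioc (0:ℤ) ⌊2*L⌋,
        (if L/(gh.2:ℝ) ≤ K/(gh.1:ℝ) then (L/(gh.2:ℝ))^2 else 0) ≤ K*L*(1 + Real.log (2*L)) := by
      rw [Finset.sum_product]
      rw [Finset.sum_comm]
      calc ∑ h ∈ Finset.Ioc (0:ℤ) ⌊2*L⌋, ∑ g ∈ Finset.Ioc (0:ℤ) ⌊2*K⌋,
            (if L/(h:ℝ) ≤ K/(g:ℝ) then (L/(h:ℝ))^2 else 0)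
          ≤ ∑ h ∈ Finset.Ioc (0:ℤ) ⌊2*L⌋, K*L/(h:ℝ) := by
            apply Finset.sum_le_sum
            intro h hh
            rw [Finset.mem_Ioc] at hh
            exact inner2 h hh.1
        _ = K*L * ∑ h ∈ Finset.Ioc (0:ℤ) ⌊2*L⌋, (1:ℝ)/(h:ℝ) := by
            rw [Finset.mul_sum]
            apply Finset.sum_congr rfl
            intro h _
            ring
        _ ≤ K*L*(1 + Real.log (2*L)) := by
            apply mul_le_mul_of_nonneg_left hharmL (by positivity)
    linarith
  calc ∑ gh ∈ Finset.Ioc (0:ℤ) ⌊2*K⌋ ×ˢ Finset.Ioc (0:ℤ) ⌊2*L⌋,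
      (min (K/(gh.1:ℝ)) (L/(gh.2:ℝ)))^2
      ≤ K*L*(1 + Real.log (2*K)) + K*L*(1 + Real.log (2*L)) := le_trans step1 split
    _ = K*L*(2 + Real.log (2*K) + Real.log (2*L)) := by ring

lemma main_count {α β K L δ : ℝ} (hα : α ≠ 0) (hβ : β ≠ 0) (hK : 1 ≤ K) (hL : 1 ≤ L)
    (hδ : 0 < δ) :
    ((Fl α β K L δ).card : ℝ)
      ≤ 45*(K*L*Real.log (2*K*L)) + 576*δ/(min |α| |β|)*(K^2*L^2) := by
  have hμ : 0 < min |α| |β| := lt_min (abs_pos.2 hα) (abs_pos.2 hβ)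
  have hKpos : (0:ℝ) < K := by linarith
  have hLpos : (0:ℝ) < L := by linarith
  have hKfl : (1:ℤ) ≤ ⌊2*K⌋ := Int.le_floor.2 (by push_cast; linarith)
  have hLfl : (1:ℤ) ≤ ⌊2*L⌋ := Int.le_floor.2 (by push_cast; linarith)
  set t : Finset (ℤ×ℤ) := Finset.Ioc (0:ℤ) ⌊2*K⌋ ×ˢ Finset.Ioc (0:ℤ) ⌊2*L⌋ with ht
  have Hmap : ∀ q ∈ Fl α β K L δ,
      ((Int.gcd q.1.1 q.1.2 : ℤ), (Int.gcd q.2.1 q.2.2 : ℤ)) ∈ t := by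
    intro q hq
    rw [Fl, Finset.mem_filter, Finset.mem_product, Finset.mem_product, Finset.mem_product,
      Finset.mem_Ioc, Finset.mem_Ioc, Finset.mem_Ioc, Finset.mem_Ioc] at hq
    obtain ⟨⟨⟨⟨h1, h2⟩, h3, h4⟩, ⟨h5, h6⟩, h7, h8⟩, _⟩ := hq
    have hk1 : (0:ℤ) < q.1.1 := by
      have : (0:ℝ) < (q.1.1:ℝ) := lt_of_lt_of_le hKpos (le_of_lt (Int.floor_lt.1 h1))
      exact_mod_cast this
    have hl1 : (0:ℤ) < q.2.1 := by
      have : (0:ℝ) < (q.2.1:ℝ) := lt_of_lt_of_le hLpos (le_of_lt (Int.floor_lt.1 h5))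
      exact_mod_cast this
    have hgpos : 0 < Int.gcd q.1.1 q.1.2 := Int.gcd_pos_iff.2 (Or.inl hk1.ne')
    have hhpos : 0 < Int.gcd q.2.1 q.2.2 := Int.gcd_pos_iff.2 (Or.inl hl1.ne')
    rw [ht, Finset.mem_product, Finset.mem_Ioc, Finset.mem_Ioc]
    have e1 : (0:ℤ) < (Int.gcd q.1.1 q.1.2 : ℤ) := by exact_mod_cast hgpos
    have e2 : (0:ℤ) < (Int.gcd q.2.1 q.2.2 : ℤ) := by exact_mod_cast hhpos
    exact ⟨⟨e1, le_trans (Int.le_of_dvd hk1 (Int.gcd_dvd_left _ _)) h2⟩,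
      e2, le_trans (Int.le_of_dvd hl1 (Int.gcd_dvd_left _ _)) h6⟩
  have hcard := Finset.card_eq_sum_card_fiberwise Hmap
  have hcardR : ((Fl α β K L δ).card : ℝ) = ∑ gh ∈ t, ((Fgh α β K L δ gh).card : ℝ) := by
    rw [hcard]
    push_cast
    rfl
  have hfibbound : ∀ gh ∈ t, ((Fgh α β K L δ gh).card : ℝ)
      ≤ 144*δ/(min |α| |β|)*((K/(gh.1:ℝ))^2*(L/(gh.2:ℝ))^2) + 9*(min (K/(gh.1:ℝ)) (L/(gh.2:ℝ)))^2 := by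
    rintro ⟨g, h⟩ hgh
    rw [ht, Finset.mem_product, Finset.mem_Ioc, Finset.mem_Ioc] at hgh
    obtain ⟨⟨hg0, hg2⟩, hh0, hh2⟩ := hgh
    have hg2R : (g:ℝ) ≤ 2*K := le_trans (by exact_mod_cast hg2) (Int.floor_le _)
    have hh2R : (h:ℝ) ≤ 2*L := le_trans (by exact_mod_cast hh2) (Int.floor_le _)
    exact Fgh_bound hα hβ hK hL hδ hg0 hh0 hg2R hh2R
  have hsum1 : ∑ gh ∈ t, (K/(gh.1:ℝ))^2*(L/(gh.2:ℝ))^2 ≤ 4*(K^2*L^2) := by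
    rw [ht, Finset.sum_product]
    have hbaselK : ∑ g ∈ Finset.Ioc (0:ℤ) ⌊2*K⌋, (K/(g:ℝ))^2 ≤ 2*K^2 := by
      have he : ∑ g ∈ Finset.Ioc (0:ℤ) ⌊2*K⌋, (K/(g:ℝ))^2
          = K^2 * ∑ g ∈ Finset.Ioc (0:ℤ) ⌊2*K⌋, (1:ℝ)/(g:ℝ)^2 := by
        rw [Finset.mul_sum]
        apply Finset.sum_congr rfl
        intro g _
        rw [div_pow, mul_one_div]
      rw [he]
      have := basel_bound ⌊2*K⌋ hKfl
      nlinarith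
    have hbaselL : ∑ h ∈ Finset.Ioc (0:ℤ) ⌊2*L⌋, (L/(h:ℝ))^2 ≤ 2*L^2 := by
      have he : ∑ h ∈ Finset.Ioc (0:ℤ) ⌊2*L⌋, (L/(h:ℝ))^2
          = L^2 * ∑ h ∈ Finset.Ioc (0:ℤ) ⌊2*L⌋, (1:ℝ)/(h:ℝ)^2 := by
        rw [Finset.mul_sum]
        apply Finset.sum_congr rfl
        intro h _
        rw [div_pow, mul_one_div]
      rw [he]
      have := basel_bound ⌊2*L⌋ hLfl
      nlinarith
    have heq : ∑ g ∈ Finset.Ioc (0:ℤ) ⌊2*K⌋, ∑ h ∈ Finset.Ioc (0:ℤ) ⌊2*L⌋,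
        (K/(g:ℝ))^2*(L/(h:ℝ))^2
        = (∑ g ∈ Finset.Ioc (0:ℤ) ⌊2*K⌋, (K/(g:ℝ))^2) *
          (∑ h ∈ Finset.Ioc (0:ℤ) ⌊2*L⌋, (L/(h:ℝ))^2) := by
      rw [Finset.sum_mul]
      apply Finset.sum_congr rfl
      intro g _
      rw [Finset.mul_sum]
    rw [heq]
    have hnn1 : (0:ℝ) ≤ ∑ g ∈ Finset.Ioc (0:ℤ) ⌊2*K⌋, (K/(g:ℝ))^2 :=
      Finset.sum_nonneg (fun g _ => by positivity)
    nlinarith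
  have hsum2 := min_sq_sum hK hL
  have hlog : 2 + Real.log (2*K) + Real.log (2*L) ≤ 5 * Real.log (2*K*L) := by
    have l1 : Real.log (2*K) ≤ Real.log (2*K*L) :=
      Real.log_le_log (by positivity) (by nlinarith)
    have l2 : Real.log (2*L) ≤ Real.log (2*K*L) :=
      Real.log_le_log (by positivity) (by nlinarith)
    have l3 : Real.log 2 ≤ Real.log (2*K*L) :=
      Real.log_le_log (by norm_num) (by nlinarith)
    have l4 : (0.6931471803:ℝ) < Real.log 2 := Real.log_two_gt_d9
    linarith
  have hminsum : ∑ gh ∈ t, (min (K/(gh.1:ℝ)) (L/(gh.2:ℝ)))^2 ≤ 5*(K*L*Real.log (2*K*L)) := by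
    rw [ht]
    calc ∑ gh ∈ Finset.Ioc (0:ℤ) ⌊2*K⌋ ×ˢ Finset.Ioc (0:ℤ) ⌊2*L⌋,
        (min (K/(gh.1:ℝ)) (L/(gh.2:ℝ)))^2
        ≤ K*L*(2 + Real.log (2*K) + Real.log (2*L)) := hsum2
      _ ≤ K*L*(5 * Real.log (2*K*L)) := by
          apply mul_le_mul_of_nonneg_left hlog (by positivity)
      _ = 5*(K*L*Real.log (2*K*L)) := by ring
  calc ((Fl α β K L δ).card : ℝ)
      = ∑ gh ∈ t, ((Fgh α β K L δ gh).card : ℝ) := hcardR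
    _ ≤ ∑ gh ∈ t, (144*δ/(min |α| |β|)*((K/(gh.1:ℝ))^2*(L/(gh.2:ℝ))^2)
          + 9*(min (K/(gh.1:ℝ)) (L/(gh.2:ℝ)))^2) := Finset.sum_le_sum hfibbound
    _ = 144*δ/(min |α| |β|) * (∑ gh ∈ t, (K/(gh.1:ℝ))^2*(L/(gh.2:ℝ))^2)
          + 9 * (∑ gh ∈ t, (min (K/(gh.1:ℝ)) (L/(gh.2:ℝ)))^2) := by
        rw [Finset.sum_add_distrib, Finset.mul_sum, Finset.mul_sum]
    _ ≤ 144*δ/(min |α| |β|) * (4*(K^2*L^2)) + 9 * (5*(K*L*Real.log (2*K*L))) := by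
        have hc1 : (0:ℝ) ≤ 144*δ/(min |α| |β|) := by positivity
        have := mul_le_mul_of_nonneg_left hsum1 hc1
        have := mul_le_mul_of_nonneg_left hminsum (by norm_num : (0:ℝ) ≤ 9)
        linarith
    _ ≤ 45*(K*L*Real.log (2*K*L)) + 576*δ/(min |α| |β|)*(K^2*L^2) := by
        have : 144*δ/(min |α| |β|) * (4*(K^2*L^2)) = 576*δ/(min |α| |β|)*(K^2*L^2) := by
          ring
        linarith

lemma log_dist {u v c C : ℝ} (hc : 0 < c) (hu : c ≤ u) (hv : c ≤ v) (h : |u - v| ≤ C) :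
    |Real.log u - Real.log v| ≤ C/c := by
  have hC : 0 ≤ C := le_trans (abs_nonneg _) h
  have hup : 0 < u := lt_of_lt_of_le hc hu
  have hvp : 0 < v := lt_of_lt_of_le hc hv
  obtain ⟨ha, hb⟩ := abs_le.1 h
  rw [abs_le]
  constructor
  · have h1 : Real.log (v/u) ≤ v/u - 1 := Real.log_le_sub_one_of_pos (by positivity)
    rw [Real.log_div hvp.ne' hup.ne'] at h1
    have h2 : v/u - 1 = (v - u)/u := by field_simp
    have h3 : (v-u)/u ≤ C/c := by
      calc (v-u)/u ≤ C/u := by gcongr; linarith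
        _ ≤ C/c := by gcongr
    linarith
  · have h1 : Real.log (u/v) ≤ u/v - 1 := Real.log_le_sub_one_of_pos (by positivity)
    rw [Real.log_div hup.ne' hvp.ne'] at h1
    have h2 : u/v - 1 = (u - v)/v := by field_simp
    have h3 : (u-v)/v ≤ C/c := by
      calc (u-v)/v ≤ C/v := by gcongr
        _ ≤ C/c := by gcongr
    linarith

lemma expo_low {a t : ℝ} (ht0 : 0 ≤ t) (ht2 : t ≤ Real.log 2) : -(|a| * Real.log 2) ≤ a * t := by
  rcases abs_cases a with ⟨he, _⟩ | ⟨he, _⟩ <;> nlinarith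

lemma u_log_lower {a b K L : ℝ} (hK : 1 ≤ K) (hL : 1 ≤ L) {x y : ℤ}
    (hx1 : K < (x:ℝ)) (hx2 : (x:ℝ) ≤ 2*K) (hy1 : L < (y:ℝ)) (hy2 : (y:ℝ) ≤ 2*L) :
    Real.log ((x:ℝ)^a * (y:ℝ)^b / (K^a * L^b))
      = a*(Real.log x - Real.log K) + b*(Real.log y - Real.log L)
    ∧ (2:ℝ)^(-(|a|+|b|)) ≤ (x:ℝ)^a * (y:ℝ)^b / (K^a * L^b) := by
  have hKp : (0:ℝ) < K := by linarith
  have hLp : (0:ℝ) < L := by linarith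
  have hxp : (0:ℝ) < x := lt_trans hKp hx1
  have hyp : (0:ℝ) < y := lt_trans hLp hy1
  have hxa : (0:ℝ) < (x:ℝ)^a := Real.rpow_pos_of_pos hxp a
  have hyb : (0:ℝ) < (y:ℝ)^b := Real.rpow_pos_of_pos hyp b
  have hKa : (0:ℝ) < K^a := Real.rpow_pos_of_pos hKp a
  have hLb : (0:ℝ) < L^b := Real.rpow_pos_of_pos hLp b
  have hlog : Real.log ((x:ℝ)^a * (y:ℝ)^b / (K^a * L^b))
      = a*(Real.log x - Real.log K) + b*(Real.log y - Real.log L) := by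
    rw [Real.log_div (by positivity) (by positivity), Real.log_mul hxa.ne' hyb.ne',
      Real.log_mul hKa.ne' hLb.ne', Real.log_rpow hxp, Real.log_rpow hyp,
      Real.log_rpow hKp, Real.log_rpow hLp]
    ring
  refine ⟨hlog, ?_⟩
  have ht1 : 0 ≤ Real.log x - Real.log K := by
    have := Real.log_le_log hKp hx1.le
    linarith
  have ht2 : Real.log x - Real.log K ≤ Real.log 2 := by
    have h1 : Real.log x ≤ Real.log (2*K) := Real.log_le_log hxp hx2
    rw [Real.log_mul (by norm_num) hKp.ne'] at h1
    linarith
  have hs1 : 0 ≤ Real.log y - Real.log L := by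
    have := Real.log_le_log hLp hy1.le
    linarith
  have hs2 : Real.log y - Real.log L ≤ Real.log 2 := by
    have h1 : Real.log y ≤ Real.log (2*L) := Real.log_le_log hyp hy2
    rw [Real.log_mul (by norm_num) hLp.ne'] at h1
    linarith
  have e1 := expo_low (a := a) ht1 ht2
  have e2 := expo_low (a := b) hs1 hs2
  have hupos : (0:ℝ) < (x:ℝ)^a * (y:ℝ)^b / (K^a * L^b) := by positivity
  have hc1 : Real.log ((2:ℝ)^(-(|a|+|b|))) = -(|a|+|b|) * Real.log 2 :=
    Real.log_rpow (by norm_num) _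
  have hle : Real.log ((2:ℝ)^(-(|a|+|b|))) ≤ Real.log ((x:ℝ)^a * (y:ℝ)^b / (K^a * L^b)) := by
    rw [hc1, hlog]
    nlinarith
  calc (2:ℝ)^(-(|a|+|b|)) = Real.exp (Real.log ((2:ℝ)^(-(|a|+|b|)))) :=
        (Real.exp_log (Real.rpow_pos_of_pos (by norm_num) _)).symm
    _ ≤ Real.exp (Real.log ((x:ℝ)^a * (y:ℝ)^b / (K^a * L^b))) := Real.exp_le_exp.2 hle
    _ = (x:ℝ)^a * (y:ℝ)^b / (K^a * L^b) := Real.exp_log hupos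

theorem stmt_6 (α β : ℝ) (hα : α ≠ 0) (hβ : β ≠ 0) :
    ∃ C > 0, ∀ K L : ℝ, 1 ≤ K → 1 ≤ L → ∀ C' : ℝ, 0 < C' →
      (Nat.card {q : ℤ × ℤ × ℤ × ℤ //
          (K < q.1 ∧ (q.1 : ℝ) ≤ 2 * K) ∧
          (K < q.2.1 ∧ (q.2.1 : ℝ) ≤ 2 * K) ∧
          (L < q.2.2.1 ∧ (q.2.2.1 : ℝ) ≤ 2 * L) ∧
          (L < q.2.2.2 ∧ (q.2.2.2 : ℝ) ≤ 2 * L) ∧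
          |(q.1 : ℝ) ^ α * (q.2.2.1 : ℝ) ^ β / (K ^ α * L ^ β)
            - (q.2.1 : ℝ) ^ α * (q.2.2.2 : ℝ) ^ β / (K ^ α * L ^ β)| ≤ C'} : ℝ)
        ≤ C * (K * L * Real.log (2 * K * L) + K ^ 2 * L ^ 2 * C') := by
  have hμ : 0 < min |α| |β| := lt_min (abs_pos.2 hα) (abs_pos.2 hβ)
  have htwo : (0:ℝ) < (2:ℝ)^(|α|+|β|) := Real.rpow_pos_of_pos (by norm_num) _
  refine ⟨45 + 576*(2:ℝ)^(|α|+|β|)/(min |α| |β|), by positivity, ?_⟩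
  intro K L hK hL C' hC'
  have hKpos : (0:ℝ) < K := by linarith
  have hLpos : (0:ℝ) < L := by linarith
  set δ : ℝ := C' * (2:ℝ)^(|α|+|β|) with hδdef
  have hδ : 0 < δ := by positivity
  -- injection into Fl
  have hmem : ∀ q : ℤ × ℤ × ℤ × ℤ,
      ((K < q.1 ∧ (q.1 : ℝ) ≤ 2 * K) ∧
          (K < q.2.1 ∧ (q.2.1 : ℝ) ≤ 2 * K) ∧
          (L < q.2.2.1 ∧ (q.2.2.1 : ℝ) ≤ 2 * L) ∧
          (L < q.2.2.2 ∧ (q.2.2.2 : ℝ) ≤ 2 * L) ∧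
          |(q.1 : ℝ) ^ α * (q.2.2.1 : ℝ) ^ β / (K ^ α * L ^ β)
            - (q.2.1 : ℝ) ^ α * (q.2.2.2 : ℝ) ^ β / (K ^ α * L ^ β)| ≤ C') →
      ((q.1, q.2.1), (q.2.2.1, q.2.2.2)) ∈ Fl α β K L δ := by
    rintro q ⟨⟨h1, h2⟩, ⟨h3, h4⟩, ⟨h5, h6⟩, ⟨h7, h8⟩, h9⟩
    obtain ⟨lg1, lo1⟩ := u_log_lower (a := α) (b := β) hK hL h1 h2 h5 h6
    obtain ⟨lg2, lo2⟩ := u_log_lower (a := α) (b := β) hK hL h3 h4 h7 h8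
    have hdist := log_dist (c := (2:ℝ)^(-(|α|+|β|))) (Real.rpow_pos_of_pos (by norm_num) _)
      lo1 lo2 h9
    rw [lg1, lg2] at hdist
    have hcd : C'/(2:ℝ)^(-(|α|+|β|)) = δ := by
      rw [Real.rpow_neg (by norm_num : (0:ℝ) ≤ 2), div_inv_eq_mul]
    rw [hcd] at hdist
    rw [Fl, Finset.mem_filter, Finset.mem_product, Finset.mem_product, Finset.mem_product,
      Finset.mem_Ioc, Finset.mem_Ioc, Finset.mem_Ioc, Finset.mem_Ioc]
    refine ⟨⟨⟨⟨Int.floor_lt.2 h1, Int.le_floor.2 h2⟩, Int.floor_lt.2 h3, Int.le_floor.2 h4⟩,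
      ⟨Int.floor_lt.2 h5, Int.le_floor.2 h6⟩, Int.floor_lt.2 h7, Int.le_floor.2 h8⟩, ?_⟩
    have : α*(Real.log (q.1:ℝ) - Real.log (q.2.1:ℝ)) + β*(Real.log (q.2.2.1:ℝ) - Real.log (q.2.2.2:ℝ))
        = (α*(Real.log (q.1:ℝ) - Real.log K) + β*(Real.log (q.2.2.1:ℝ) - Real.log L))
          - (α*(Real.log (q.2.1:ℝ) - Real.log K) + β*(Real.log (q.2.2.2:ℝ) - Real.log L)) := by
      ring
    rw [this]
    exact hdist
  have hcardle : (Nat.card {q : ℤ × ℤ × ℤ × ℤ //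
      (K < q.1 ∧ (q.1 : ℝ) ≤ 2 * K) ∧
      (K < q.2.1 ∧ (q.2.1 : ℝ) ≤ 2 * K) ∧
      (L < q.2.2.1 ∧ (q.2.2.1 : ℝ) ≤ 2 * L) ∧
      (L < q.2.2.2 ∧ (q.2.2.2 : ℝ) ≤ 2 * L) ∧
      |(q.1 : ℝ) ^ α * (q.2.2.1 : ℝ) ^ β / (K ^ α * L ^ β)
        - (q.2.1 : ℝ) ^ α * (q.2.2.2 : ℝ) ^ β / (K ^ α * L ^ β)| ≤ C'})
      ≤ (Fl α β K L δ).card := by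
    rw [← Nat.card_eq_finsetCard (Fl α β K L δ)]
    apply Nat.card_le_card_of_injective
      (fun s => (⟨((s.val.1, s.val.2.1), (s.val.2.2.1, s.val.2.2.2)), hmem s.val s.property⟩ :
        {r // r ∈ Fl α β K L δ}))
    intro a b hab
    have h := congrArg Subtype.val hab
    simp only at h
    apply Subtype.ext
    have e1 : a.val.1 = b.val.1 := congrArg (fun r => r.1.1) h
    have e2 : a.val.2.1 = b.val.2.1 := congrArg (fun r => r.1.2) h
    have e3 : a.val.2.2.1 = b.val.2.2.1 := congrArg (fun r => r.2.1) h
    have e4 : a.val.2.2.2 = b.val.2.2.2 := congrArg (fun r => r.2.2) h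
    exact Prod.ext e1 (Prod.ext e2 (Prod.ext e3 e4))
  have hmain := main_count (α := α) (β := β) hα hβ hK hL hδ
  have hlogpos : 0 < Real.log (2*K*L) := Real.log_pos (by nlinarith)
  have hfinal : ((Fl α β K L δ).card : ℝ)
      ≤ (45 + 576*(2:ℝ)^(|α|+|β|)/(min |α| |β|)) * (K * L * Real.log (2 * K * L) + K ^ 2 * L ^ 2 * C') := by
    have heq : 576*δ/(min |α| |β|)*(K^2*L^2)
        = (576*(2:ℝ)^(|α|+|β|)/(min |α| |β|)) * (K^2*L^2*C') := by
      rw [hδdef]; ring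
    have hc2 : 0 < 576*(2:ℝ)^(|α|+|β|)/(min |α| |β|) := by positivity
    have hterm1 : 0 ≤ K * L * Real.log (2*K*L) := by positivity
    have hterm2 : 0 ≤ K^2*L^2*C' := by positivity
    nlinarith [hmain]
  calc (Nat.card _ : ℝ) ≤ ((Fl α β K L δ).card : ℝ) := by exact_mod_cast hcardle
    _ ≤ _ := hfinal
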